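/- arXiv:2101.03000 — 4 statements merged into one kernel-verified Lean document; each statement's English description precedes it below -/
import Mathlib

section
/- Turnpike cardinality bound (Proposition 2, trajectory form). Let n ∈ ℕ, let x_0, x_1, …, x_N ∈ ℝ^n be a finite sequence of points, let ℓ_0, …, ℓ_{N−1} be nonnegative real numbers, let x̄ ∈ ℝ^n, let λ : ℝ^n → ℝ, let Λ, V̂ ≥ 0 be constants, and let α be a class-K function. Assume: (i) the strict dissipation inequality λ(x_{k+1}) − λ(x_k) ≤ −α(‖x_k − x̄‖) + ℓ_k holds for every k ∈ {0, …, N−1}; (ii) λ(x_N) − λ(x_0) ≥ −Λ; (iii) Σ_{k=0}^{N−1} ℓ_k ≤ V̂. Then for every ε > 0, the cardinality of {k ∈ {0, …, N−1} : ‖x_k − x̄‖ > ε} is at most (Λ + V̂)/α(ε), and equivalently the cardinality of {k ∈ {0, …, N−1} : ‖x_k − x̄‖ ≤ ε} is at least N − (Λ + V̂)/α(ε). -/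
/-- A function `α : [0,∞) → [0,∞)` is of class K if it is continuous, strictly
increasing and satisfies `α 0 = 0`. -/
def IsClassK (α : ℝ → ℝ) : Prop :=
  ContinuousOn α (Set.Ici 0) ∧ StrictMonoOn α (Set.Ici 0) ∧ α 0 = 0

/-- Turnpike cardinality bound (Proposition 2, trajectory form). -/
theorem turnpike_cardinality_bound
    (n N : ℕ) (x : ℕ → EuclideanSpace ℝ (Fin n)) (ℓ : ℕ → ℝ)
    (xbar : EuclideanSpace ℝ (Fin n)) (lam : EuclideanSpace ℝ (Fin n) → ℝ)
    (Λ Vhat : ℝ) (hΛ : 0 ≤ Λ) (hVhat : 0 ≤ Vhat)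
    (α : ℝ → ℝ) (hα : IsClassK α)
    (hℓ : ∀ k < N, 0 ≤ ℓ k)
    (hdiss : ∀ k < N, lam (x (k + 1)) - lam (x k) ≤ -α ‖x k - xbar‖ + ℓ k)
    (hlow : -Λ ≤ lam (x N) - lam (x 0))
    (hsum : ∑ k ∈ Finset.range N, ℓ k ≤ Vhat) :
    ∀ ε > 0,
      (((Finset.range N).filter (fun k => ε < ‖x k - xbar‖)).card : ℝ)
          ≤ (Λ + Vhat) / α ε ∧
      (N : ℝ) - (Λ + Vhat) / α ε
          ≤ ((Finset.range N).filter (fun k => ‖x k - xbar‖ ≤ ε)).card := by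
  obtain ⟨hc, hmono, h0⟩ := hα
  intro ε hε
  have hαε : 0 < α ε := by
    have := hmono Set.self_mem_Ici (Set.mem_Ici.mpr hε.le) hε
    rwa [h0] at this
  have hnonneg : ∀ k, 0 ≤ α ‖x k - xbar‖ := by
    intro k
    have := hmono.monotoneOn Set.self_mem_Ici
      (Set.mem_Ici.mpr (norm_nonneg (x k - xbar))) (norm_nonneg (x k - xbar))
    rwa [h0] at this
  have hsumα : ∑ k ∈ Finset.range N, α ‖x k - xbar‖ ≤ Λ + Vhat := by
    have htel : ∑ k ∈ Finset.range N, (lam (x (k + 1)) - lam (x k))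
        = lam (x N) - lam (x 0) := Finset.sum_range_sub (fun k => lam (x k)) N
    have h1 : ∑ k ∈ Finset.range N, α ‖x k - xbar‖
        ≤ ∑ k ∈ Finset.range N, (ℓ k - (lam (x (k + 1)) - lam (x k))) := by
      apply Finset.sum_le_sum
      intro k hk
      have := hdiss k (Finset.mem_range.mp hk)
      linarith
    rw [Finset.sum_sub_distrib, htel] at h1
    linarith
  set S := (Finset.range N).filter (fun k => ε < ‖x k - xbar‖) with hS
  have hcard : (S.card : ℝ) * α ε ≤ Λ + Vhat := by
    have h2 : (S.card : ℝ) * α ε ≤ ∑ k ∈ S, α ‖x k - xbar‖ := by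
      rw [← nsmul_eq_mul, ← Finset.sum_const]
      apply Finset.sum_le_sum
      intro k hk
      have hk' := (Finset.mem_filter.mp hk).2
      exact (hmono (Set.mem_Ici.mpr hε.le) (Set.mem_Ici.mpr (norm_nonneg _)) hk').le
    have h3 : ∑ k ∈ S, α ‖x k - xbar‖ ≤ ∑ k ∈ Finset.range N, α ‖x k - xbar‖ :=
      Finset.sum_le_sum_of_subset_of_nonneg (Finset.filter_subset _ _)
        (fun k _ _ => hnonneg k)
    linarith
  have hfirst : (S.card : ℝ) ≤ (Λ + Vhat) / α ε := by
    rw [le_div_iff₀ hαε]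
    exact hcard
  refine ⟨hfirst, ?_⟩
  have hcompl : S.card + ((Finset.range N).filter (fun k => ‖x k - xbar‖ ≤ ε)).card
      = N := by
    have := Finset.card_filter_add_card_filter_not
      (s := Finset.range N) (p := fun k => ε < ‖x k - xbar‖)
    simpa [not_lt] using this
  have : (((Finset.range N).filter (fun k => ‖x k - xbar‖ ≤ ε)).card : ℝ)
      = (N : ℝ) - S.card := by
    have := congrArg (fun m : ℕ => (m : ℝ)) hcompl
    push_cast at this
    linarith
  rw [this]
  linarith
end

section
/- Turnpikes in DNN training (Proposition 2, optimal-control form). Assume σ : ℝ → ℝ is continuous with σ(0) = 0. Let ℓ : X × U → [0,∞) be any nonnegative stage cost with ℓ(x̄, 0) = 0 for a fixed x̄ ∈ X, let ℓ_f : X → [0,∞), γ > 0, N ∈ ℕ, and let (x*, u*) be an optimal control sequence/trajectory pair from x_0 for the total cost J_N^γ. Suppose there exist a nonnegative storage function λ : X → [0,∞), a class-K function α, and a constant Λ ≥ λ(x_0), such that λ(f(x*_k, u*_k)) − λ(x*_k) ≤ −α(‖x*_k − x̄‖) + ℓ(x*_k, u*_k) for all k ∈ {0, …, N−1}. Suppose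 further there exists a control sequence ũ_0, …, ũ_{N−1} whose trajectory x̃ from x_0 satisfies Σ_{k=0}^{N−1} ℓ(x̃_k, ũ_k) + γ ℓ_f(x̃_N) ≤ V̂ for some constant V̂ ≥ 0. Then for every ε > 0, the cardinality of {k ∈ {0, …, N−1} : ‖x*_k − x̄‖ > ε} is at most (Λ + V̂)/α(ε), and hence the cardinality of {k : ‖x*_k − x̄‖ ≤ ε} is at least N − (Λ + V̂)/α(ε). -/
noncomputable section

/-- The stacked state space `X = (ℝ^d)^D` with the stacked Euclidean norm. -/
abbrev StateX (d D : ℕ) := EuclideanSpace ℝ (Fin D × Fin d)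

/-- A control is a weight pair `u = (A, b) ∈ ℝ^{d×d} × ℝ^d`. -/
abbrev Ctrl (d : ℕ) := Matrix (Fin d) (Fin d) ℝ × (Fin d → ℝ)

/-- Residual network ensemble dynamics: every block is updated by
`xⁱ ↦ xⁱ + σ(A xⁱ + b)`, with `σ` applied componentwise. -/
def resDyn {d D : ℕ} (σ : ℝ → ℝ) (x : StateX d D) (u : Ctrl d) : StateX d D :=
  WithLp.toLp 2 (fun p => x p + σ ((∑ l, u.1 p.2 l * x (p.1, l)) + u.2 p.2))

/-- Trajectory generated by a control sequence from the initial state `x0`. -/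
def traj {d D : ℕ} (σ : ℝ → ℝ) (x0 : StateX d D) (u : ℕ → Ctrl d) : ℕ → StateX d D
  | 0 => x0
  | k + 1 => resDyn σ (traj σ x0 u k) (u k)

/-- Total cost `J_N^γ` of a control sequence for the training optimal control problem. -/
def totalCost {d D : ℕ} (σ : ℝ → ℝ) (x0 : StateX d D)
    (ℓ : StateX d D → Ctrl d → ℝ) (ℓf : StateX d D → ℝ) (γ : ℝ) (N : ℕ)
    (u : ℕ → Ctrl d) : ℝ :=
  (∑ k ∈ Finset.range N, ℓ (traj σ x0 u k) (u k)) + γ * ℓf (traj σ x0 u N)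

/-- Turnpikes in DNN training (Proposition 2, optimal-control form). -/
theorem turnpike_DNN_training {d D : ℕ} (σ : ℝ → ℝ)
    (hσc : Continuous σ) (hσ0 : σ 0 = 0)
    (ℓ : StateX d D → Ctrl d → ℝ) (hℓ : ∀ x u, 0 ≤ ℓ x u)
    (xbar : StateX d D) (hℓbar : ℓ xbar (0, 0) = 0)
    (ℓf : StateX d D → ℝ) (hℓf : ∀ x, 0 ≤ ℓf x)
    (γ : ℝ) (hγ : 0 < γ) (N : ℕ) (x0 : StateX d D)
    (ustar : ℕ → Ctrl d)
    (hopt : ∀ u : ℕ → Ctrl d,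
      totalCost σ x0 ℓ ℓf γ N ustar ≤ totalCost σ x0 ℓ ℓf γ N u)
    (lam : StateX d D → ℝ) (hlam : ∀ x, 0 ≤ lam x)
    (α : ℝ → ℝ) (hα : IsClassK α)
    (Λ : ℝ) (hΛ : lam x0 ≤ Λ)
    (hdiss : ∀ k < N,
      lam (resDyn σ (traj σ x0 ustar k) (ustar k)) - lam (traj σ x0 ustar k)
        ≤ -α ‖traj σ x0 ustar k - xbar‖ + ℓ (traj σ x0 ustar k) (ustar k))
    (Vhat : ℝ) (hVhat : 0 ≤ Vhat)
    (util : ℕ → Ctrl d)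
    (hreach : (∑ k ∈ Finset.range N, ℓ (traj σ x0 util k) (util k))
        + γ * ℓf (traj σ x0 util N) ≤ Vhat) :
    ∀ ε > 0,
      (((Finset.range N).filter
          (fun k => ε < ‖traj σ x0 ustar k - xbar‖)).card : ℝ)
        ≤ (Λ + Vhat) / α ε ∧
      (N : ℝ) - (Λ + Vhat) / α ε
        ≤ ((Finset.range N).filter
            (fun k => ‖traj σ x0 ustar k - xbar‖ ≤ ε)).card := by

  intro ε hε
  obtain ⟨hαc, hαm, hα0⟩ := hα
  set xs : ℕ → StateX d D := traj σ x0 ustar with hxs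
  -- α is nonneg on [0,∞)
  have hαnn : ∀ t : ℝ, 0 ≤ t → 0 ≤ α t := by
    intro t ht
    rcases eq_or_lt_of_le ht with h | h
    · simp [← h, hα0]
    · have := hαm (Set.self_mem_Ici) (Set.mem_Ici.mpr ht) h
      linarith [hα0]
  have hαε : 0 < α ε := by
    have := hαm (Set.self_mem_Ici) (Set.mem_Ici.mpr hε.le) hε
    linarith [hα0]
  -- telescoping dissipation
  have htel : lam (xs N) - lam (xs 0) =
      ∑ k ∈ Finset.range N, (lam (xs (k+1)) - lam (xs k)) := by
    rw [Finset.sum_range_sub (fun k => lam (xs k))]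
  have hsum : ∑ k ∈ Finset.range N, α ‖xs k - xbar‖
      ≤ Λ + ∑ k ∈ Finset.range N, ℓ (xs k) (ustar k) := by
    have h1 : lam (xs N) - lam (xs 0) ≤
        ∑ k ∈ Finset.range N, (-α ‖xs k - xbar‖ + ℓ (xs k) (ustar k)) := by
      rw [htel]
      refine Finset.sum_le_sum fun k hk => ?_
      have hk' := Finset.mem_range.mp hk
      have := hdiss k hk'
      simpa [hxs, traj] using this
    rw [Finset.sum_add_distrib, Finset.sum_neg_distrib] at h1
    have h2 : 0 ≤ lam (xs N) := hlam _
    have h3 : lam (xs 0) ≤ Λ := by simpa [hxs, traj] using hΛ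
    linarith
  -- optimal stage cost bounded by Vhat
  have hcost : ∑ k ∈ Finset.range N, ℓ (xs k) (ustar k) ≤ Vhat := by
    have h1 := hopt util
    have h2 : 0 ≤ γ * ℓf (traj σ x0 ustar N) :=
      mul_nonneg hγ.le (hℓf _)
    simp only [totalCost] at h1
    linarith
  have hkey : ∑ k ∈ Finset.range N, α ‖xs k - xbar‖ ≤ Λ + Vhat := by linarith
  set B := (Finset.range N).filter (fun k => ε < ‖xs k - xbar‖) with hB
  have hcard : (B.card : ℝ) * α ε ≤ Λ + Vhat := by
    have h1 : (B.card : ℝ) * α ε = ∑ _k ∈ B, α ε := by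
      rw [Finset.sum_const, nsmul_eq_mul]
    have h2 : ∑ _k ∈ B, α ε ≤ ∑ k ∈ B, α ‖xs k - xbar‖ := by
      refine Finset.sum_le_sum fun k hk => ?_
      have hk' := (Finset.mem_filter.mp hk).2
      exact (hαm (Set.mem_Ici.mpr hε.le)
        (Set.mem_Ici.mpr (norm_nonneg _)) hk').le
    have h3 : ∑ k ∈ B, α ‖xs k - xbar‖ ≤ ∑ k ∈ Finset.range N, α ‖xs k - xbar‖ :=
      Finset.sum_le_sum_of_subset_of_nonneg (Finset.filter_subset _ _)
        (fun k _ _ => hαnn _ (norm_nonneg _))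
    linarith
  have hdiv : (B.card : ℝ) ≤ (Λ + Vhat) / α ε :=
    (le_div_iff₀ hαε).mpr hcard
  refine ⟨hdiv, ?_⟩
  have hsplit : ((Finset.range N).filter (fun k => ‖xs k - xbar‖ ≤ ε)).card
      + B.card = N := by
    rw [hB]
    have : ∀ k, (‖xs k - xbar‖ ≤ ε) ↔ ¬ (ε < ‖xs k - xbar‖) := by
      intro k; simp
    rw [Finset.filter_congr (fun k _ => this k), add_comm,
      Finset.card_filter_add_card_filter_not, Finset.card_range]
  have : ((Finset.range N).filter (fun k => ‖xs k - xbar‖ ≤ ε)).card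
      = (N : ℝ) - B.card := by
    have h := congrArg (Nat.cast : ℕ → ℝ) hsplit
    push_cast at h
    linarith
  rw [this]
  linarith
end
end

section
/- Near-zero loss with finite depth for the squared-distance classification loss (quantitative form of Corollary 1): take the loss ℓ_f(x) = ‖x − x̄‖², whose unique unconstrained minimizer is x̄. Let ℓ : X × U → [0,∞) be a nonnegative stage cost, γ > 0, N ∈ ℕ, and suppose there exists a length-N control sequence ũ whose trajectory x̃ from x_0 under the residual network dynamics satisfies x̃_N = x̄ (zero loss), with accumulated regularization cost C := Σ_{k=0}^{N−1} ℓ(x̃_k, ũ_k). Then every optimal pair (x*, u*) for the total cost J_N^γ satisfies ‖x*_N − x̄‖ ≤ √(C/γ); in particular, for every ε > 0, choosing γ ≥ C/ε² guarantees that the distance from x*_N to the set of unconstrained minimizers of ℓ_f is at most ε. -/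
noncomputable section

/-- Near-zero loss with finite depth for the squared-distance classification
loss `ℓ_f(x) = ‖x − x̄‖²` (quantitative form of Corollary 1). -/
theorem near_zero_loss_squared_distance {d D : ℕ} (σ : ℝ → ℝ)
    (ℓ : StateX d D → Ctrl d → ℝ) (hℓ : ∀ x u, 0 ≤ ℓ x u)
    (xbar x0 : StateX d D) (γ : ℝ) (hγ : 0 < γ) (N : ℕ)
    (util : ℕ → Ctrl d) (hreach : traj σ x0 util N = xbar)
    (C : ℝ) (hC : C = ∑ k ∈ Finset.range N, ℓ (traj σ x0 util k) (util k))
    (ustar : ℕ → Ctrl d)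
    (hopt : ∀ u : ℕ → Ctrl d,
      totalCost σ x0 ℓ (fun x => ‖x - xbar‖ ^ 2) γ N ustar
        ≤ totalCost σ x0 ℓ (fun x => ‖x - xbar‖ ^ 2) γ N u) :
    ‖traj σ x0 ustar N - xbar‖ ≤ Real.sqrt (C / γ) ∧
    ∀ ε > 0, C / ε ^ 2 ≤ γ → ‖traj σ x0 ustar N - xbar‖ ≤ ε := by
  have key := hopt util
  simp only [totalCost, hreach, sub_self, norm_zero] at key
  have hsum : 0 ≤ ∑ k ∈ Finset.range N, ℓ (traj σ x0 ustar k) (ustar k) :=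
    Finset.sum_nonneg fun k _ => hℓ _ _
  have hbd : γ * ‖traj σ x0 ustar N - xbar‖ ^ 2 ≤ C := by
    rw [hC]; nlinarith [key]
  have hsq : ‖traj σ x0 ustar N - xbar‖ ^ 2 ≤ C / γ := by
    rw [le_div_iff₀ hγ]; linarith [hbd]
  have h1 : ‖traj σ x0 ustar N - xbar‖ ≤ Real.sqrt (C / γ) := by
    have := Real.sqrt_le_sqrt hsq
    rwa [Real.sqrt_sq (norm_nonneg _)] at this
  refine ⟨h1, fun ε hε hγε => ?_⟩
  have hCε : C / γ ≤ ε ^ 2 := by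
    rw [div_le_iff₀ hγ]
    have := (div_le_iff₀ (by positivity : (0:ℝ) < ε ^ 2)).mp hγε
    nlinarith
  calc ‖traj σ x0 ustar N - xbar‖ ≤ Real.sqrt (C / γ) := h1
    _ ≤ Real.sqrt (ε ^ 2) := Real.sqrt_le_sqrt hCε
    _ = ε := by rw [Real.sqrt_sq hε.le]
end
end

section
/- Transferring depth bounds between regularization norms (core of Proposition 3): assume σ : ℝ → ℝ satisfies σ(0) = 0. Fix an admissible parametrization π = (s_x, s_u, p_x, p_u, q, r) with q, r > 0, p_x, p_u ∈ (1, ∞], s_x, s_u > 1, and define the stage cost ℓ_π(x,u) = r‖u‖_{p_u}^{s_u} + q‖x − x̄‖_{p_x}^{s_x}, where ‖·‖_p denotes the coordinatewise p-norm on the stacked vectors. Suppose there is a length-M control sequence û with trajectory x̂ from x_0 under the residual network dynamics satisfying x̂_M = x̄, and set Ṽ := Σ_{k=0}^{M−1} ℓ_π(x̂_k, û_k). Then: (a) for every horizon N ≥ M, extending û by N − M zero controls yields a length-N control sequence from x_0 with terminal state x̄ and accumulated cost Σ_{k=0}^{N−1} ℓ_π equal to Ṽ; hence the infimum of the π-regularization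 cost over length-N control sequences from x_0 is at most Ṽ; (b) consequently, for any nonnegative terminal loss ℓ_f with ℓ_f(x̄) = 0 and any γ > 0, every optimal pair (x*, u*) for the total cost Σ_{k=0}^{N−1} ℓ_π(x_k, u_k) + γ ℓ_f(x_N) with N ≥ M satisfies, for every ε > 0, card{k ∈ {0, …, N−1} : ‖x*_k − x̄‖_{p_x} > ε} ≤ Ṽ/(q·ε^{s_x}). -/
noncomputable section

open scoped ENNReal

/-- The coordinatewise `ℓ^p` norm of a finite family of reals, `p ∈ [1, ∞]`
(`‖v‖_∞` is the maximum absolute coordinate). -/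
noncomputable def lpNorm {ι : Type*} [Fintype ι] (p : ℝ≥0∞) (v : ι → ℝ) : ℝ :=
  if p = ⊤ then ⨆ i, |v i| else (∑ i, |v i| ^ p.toReal) ^ (1 / p.toReal)

/-- The coordinate vector (in `ℝ^{d²+d}`) of a control `u = (A, b)`. -/
def ctrlCoords {d : ℕ} (u : Ctrl d) : (Fin d × Fin d) ⊕ Fin d → ℝ :=
  Sum.elim (fun jl => u.1 jl.1 jl.2) u.2

/-- Stage cost `ℓ_π(x,u) = r‖u‖_{p_u}^{s_u} + q‖x − x̄‖_{p_x}^{s_x}` for the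
admissible parametrization `π = (s_x, s_u, p_x, p_u, q, r)`. -/
noncomputable def stageCost {d D : ℕ} (px pu : ℝ≥0∞) (sx su q r : ℝ)
    (xbar : StateX d D) (x : StateX d D) (u : Ctrl d) : ℝ :=
  r * lpNorm pu (ctrlCoords u) ^ su + q * lpNorm px (fun p => x p - xbar p) ^ sx

section Aux

variable {ι : Type*} [Fintype ι]

lemma lpNorm_nonneg (p : ℝ≥0∞) (v : ι → ℝ) : 0 ≤ lpNorm p v := by
  unfold lpNorm
  split
  · exact Real.iSup_nonneg fun i => abs_nonneg _
  · exact Real.rpow_nonneg (Finset.sum_nonneg fun i _ => Real.rpow_nonneg (abs_nonneg _) _) _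

lemma lpNorm_zero_fun (p : ℝ≥0∞) (hp : 1 < p) (v : ι → ℝ) (hv : ∀ i, v i = 0) :
    lpNorm p v = 0 := by
  unfold lpNorm
  split
  · refine le_antisymm (Real.iSup_nonpos fun i => ?_) (Real.iSup_nonneg fun i => abs_nonneg _)
    simp [hv i]
  · rename_i hne
    have hp0 : 0 < p.toReal := ENNReal.toReal_pos (by positivity) hne
    have : ∀ i ∈ Finset.univ (α := ι), |v i| ^ p.toReal = 0 := by
      intro i _
      rw [hv i, abs_zero, Real.zero_rpow hp0.ne']
    rw [Finset.sum_congr rfl this, Finset.sum_const, smul_zero,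
      Real.zero_rpow (by positivity)]

lemma stageCost_nonneg {d D : ℕ} (px pu : ℝ≥0∞) {sx su q r : ℝ}
    (hq : 0 ≤ q) (hr : 0 ≤ r) (xbar x : StateX d D) (u : Ctrl d) :
    0 ≤ stageCost px pu sx su q r xbar x u := by
  have h1 := lpNorm_nonneg pu (ctrlCoords u)
  have h2 := lpNorm_nonneg px (fun p => x p - xbar p)
  have := Real.rpow_nonneg h1 su
  have := Real.rpow_nonneg h2 sx
  unfold stageCost
  positivity

lemma stageCost_zero {d D : ℕ} (px pu : ℝ≥0∞) (hpx : 1 < px) (hpu : 1 < pu)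
    {sx su : ℝ} (q r : ℝ) (hsx : 1 < sx) (hsu : 1 < su) (xbar : StateX d D) :
    stageCost px pu sx su q r xbar xbar ((0, 0) : Ctrl d) = 0 := by
  unfold stageCost
  rw [lpNorm_zero_fun pu hpu _ (by rintro (⟨j, l⟩ | j) <;> simp [ctrlCoords]),
    lpNorm_zero_fun px hpx _ (fun p => sub_self _),
    Real.zero_rpow (by linarith), Real.zero_rpow (by linarith)]
  ring

end Aux

/-- Transferring depth bounds between regularization norms
(core of Proposition 3). -/
theorem transfer_depth_bounds_between_norms {d D : ℕ}
    (σ : ℝ → ℝ) (hσ0 : σ 0 = 0)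
    (q r sx su : ℝ) (px pu : ℝ≥0∞)
    (hq : 0 < q) (hr : 0 < r) (hpx : 1 < px) (hpu : 1 < pu)
    (hsx : 1 < sx) (hsu : 1 < su)
    (xbar x0 : StateX d D) (M : ℕ) (uhat : ℕ → Ctrl d)
    (hreach : traj σ x0 uhat M = xbar)
    (Vt : ℝ) (hVt : Vt = ∑ k ∈ Finset.range M,
        stageCost px pu sx su q r xbar (traj σ x0 uhat k) (uhat k)) :
    (∀ N : ℕ, M ≤ N →
      (traj σ x0 (fun k => if k < M then uhat k else (0, 0)) N = xbar ∧
        ∑ k ∈ Finset.range N,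
          stageCost px pu sx su q r xbar
            (traj σ x0 (fun j => if j < M then uhat j else (0, 0)) k)
            (if k < M then uhat k else (0, 0)) = Vt) ∧
      sInf {c : ℝ | ∃ u : ℕ → Ctrl d,
          c = ∑ k ∈ Finset.range N,
            stageCost px pu sx su q r xbar (traj σ x0 u k) (u k)} ≤ Vt) ∧
    (∀ (ℓf : StateX d D → ℝ), (∀ x, 0 ≤ ℓf x) → ℓf xbar = 0 →
      ∀ γ : ℝ, 0 < γ → ∀ N : ℕ, M ≤ N → ∀ ustar : ℕ → Ctrl d,
        (∀ u : ℕ → Ctrl d,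
          (∑ k ∈ Finset.range N,
              stageCost px pu sx su q r xbar (traj σ x0 ustar k) (ustar k))
            + γ * ℓf (traj σ x0 ustar N)
          ≤ (∑ k ∈ Finset.range N,
              stageCost px pu sx su q r xbar (traj σ x0 u k) (u k))
            + γ * ℓf (traj σ x0 u N)) →
        ∀ ε : ℝ, 0 < ε →
          (((Finset.range N).filter
              (fun k => ε < lpNorm px
                (fun p => traj σ x0 ustar k p - xbar p))).card : ℝ)
            ≤ Vt / (q * ε ^ sx)) := by
  set uext : ℕ → Ctrl d := fun k => if k < M then uhat k else (0, 0) with huext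
  -- trajectories agree up to M
  have hagree : ∀ k, k ≤ M → traj σ x0 uext k = traj σ x0 uhat k := by
    intro k hk
    induction k with
    | zero => rfl
    | succ n ih =>
      have hn : n < M := hk
      simp only [traj, ih hn.le, huext, if_pos hn]
      exact congrArg (resDyn σ · (uhat n)) (ih hn.le)
  -- fixed at xbar from M on
  have hfix : ∀ k, M ≤ k → traj σ x0 uext k = xbar := by
    intro k hk
    induction k with
    | zero =>
      rw [Nat.le_zero] at hk; subst hk
      rw [hagree 0 le_rfl]; exact hreach
    | succ n ih =>
      rcases Nat.lt_or_ge M (n + 1) with h | h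
      · have hM : M ≤ n := Nat.lt_succ_iff.mp h
        have hnM : ¬ n < M := not_lt.mpr hM
        show resDyn σ (traj σ x0 uext n) (uext n) = xbar
        rw [ih hM]
        ext p
        simp [resDyn, huext, hnM, hσ0]
      · have hM : M = n + 1 := le_antisymm hk h
        subst hM
        rw [hagree _ le_rfl]; exact hreach
  -- the extension cost equals Vt
  have hcost : ∀ N, M ≤ N →
      ∑ k ∈ Finset.range N,
        stageCost px pu sx su q r xbar (traj σ x0 uext k) (uext k) = Vt := by
    intro N hN
    rw [← Finset.sum_range_add_sum_Ico _ hN]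
    have h1 : ∑ k ∈ Finset.range M,
        stageCost px pu sx su q r xbar (traj σ x0 uext k) (uext k) = Vt := by
      rw [hVt]
      refine Finset.sum_congr rfl fun k hk => ?_
      have hkM : k < M := Finset.mem_range.mp hk
      rw [hagree k hkM.le]
      simp [huext, hkM]
    have h2 : ∑ k ∈ Finset.Ico M N,
        stageCost px pu sx su q r xbar (traj σ x0 uext k) (uext k) = 0 := by
      refine Finset.sum_eq_zero fun k hk => ?_
      have hkM : M ≤ k := (Finset.mem_Ico.mp hk).1
      have hnk : ¬ k < M := not_lt.mpr hkM
      rw [hfix k hkM]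
      simp only [huext, if_neg hnk]
      exact stageCost_zero px pu hpx hpu q r hsx hsu xbar
    rw [h1, h2, add_zero]
  constructor
  · intro N hN
    refine ⟨⟨hfix N hN, hcost N hN⟩, ?_⟩
    refine csInf_le ⟨0, ?_⟩ ⟨uext, (hcost N hN).symm⟩
    rintro c ⟨u, rfl⟩
    exact Finset.sum_nonneg fun k _ => stageCost_nonneg px pu hq.le hr.le _ _ _
  · intro ℓf hℓf hℓfbar γ hγ N hN ustar hopt ε hε
    set S := ∑ k ∈ Finset.range N,
        stageCost px pu sx su q r xbar (traj σ x0 ustar k) (ustar k) with hS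
    have hSle : S ≤ Vt := by
      have := hopt uext
      rw [hcost N hN, hfix N hN, hℓfbar, mul_zero, add_zero] at this
      have h0 : 0 ≤ γ * ℓf (traj σ x0 ustar N) :=
        mul_nonneg hγ.le (hℓf _)
      linarith
    set F := (Finset.range N).filter
        (fun k => ε < lpNorm px (fun p => traj σ x0 ustar k p - xbar p)) with hF
    have hεsx : (0:ℝ) < ε ^ sx := Real.rpow_pos_of_pos hε _
    have hcard : (F.card : ℝ) * (q * ε ^ sx) ≤ S := by
      calc (F.card : ℝ) * (q * ε ^ sx)
          = ∑ _k ∈ F, q * ε ^ sx := by rw [Finset.sum_const, nsmul_eq_mul]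
        _ ≤ ∑ k ∈ F, stageCost px pu sx su q r xbar (traj σ x0 ustar k) (ustar k) := by
            refine Finset.sum_le_sum fun k hk => ?_
            have hkε : ε < lpNorm px (fun p => traj σ x0 ustar k p - xbar p) :=
              (Finset.mem_filter.mp hk).2
            have h1 : ε ^ sx ≤ lpNorm px (fun p => traj σ x0 ustar k p - xbar p) ^ sx :=
              Real.rpow_le_rpow hε.le hkε.le (by linarith)
            have h2 : 0 ≤ r * lpNorm pu (ctrlCoords (ustar k)) ^ su :=
              mul_nonneg hr.le (Real.rpow_nonneg (lpNorm_nonneg _ _) _)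
            unfold stageCost
            nlinarith
        _ ≤ S := Finset.sum_le_sum_of_subset_of_nonneg (Finset.filter_subset _ _)
            fun k _ _ => stageCost_nonneg px pu hq.le hr.le _ _ _
    rw [le_div_iff₀ (by positivity)]
    linarith
end
end
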